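/- For every real L ≥ 0 and every ε ∈ (0, π/2) there exist θ₀ ∈ (π/2, 5π/8) and τ₀ > 0 such that for every θ ∈ (π/2, θ₀), every τ ∈ (0, τ₀], and every nonzero complex number z with |arg z| ≤ θ and |Im z| ≤ π/τ + L, the complex number δ_{τ,2}(e^{−zτ}) = (3/2 − 2e^{−zτ} + e^{−2zτ}/2)/τ is nonzero and satisfies |arg(δ_{τ,2}(e^{−zτ}))| ≤ π/2 + ε. -/

import Mathlib

open Real Complex

-- criterion lemma
lemma sector_crit {ε : ℝ} (hε1 : 0 < ε) (hε2 : ε < Real.pi/2) {u : ℂ} (hu : u ≠ 0)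
    (h : 0 ≤ u.re + Real.tan ε * |u.im|) : |u.arg| ≤ Real.pi/2 + ε := by
  by_contra hc
  push_neg at hc
  have habs : 0 < ‖u‖ := norm_pos_iff.mpr hu
  have hφπ : |u.arg| ≤ Real.pi := Complex.abs_arg_le_pi u
  have hre : Real.cos u.arg = u.re / ‖u‖ := Complex.cos_arg hu
  have him : Real.sin u.arg = u.im / ‖u‖ := Complex.sin_arg u
  have hcosabs : Real.cos |u.arg| = Real.cos u.arg := Real.cos_abs _
  have hsinabs : Real.sin |u.arg| = |Real.sin u.arg| := by
    rcases abs_cases u.arg with ⟨h1, h2⟩ | ⟨h1, h2⟩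
    · rw [h1, _root_.abs_of_nonneg (Real.sin_nonneg_of_nonneg_of_le_pi h2 (by nlinarith [le_abs_self u.arg]))]
    · have hπ : -Real.pi ≤ u.arg := by nlinarith [neg_abs_le u.arg]
      rw [h1, Real.sin_neg, _root_.abs_of_nonpos (Real.sin_nonpos_of_nonpos_of_neg_pi_le h2.le hπ)]
  have hcosneg : Real.cos (|u.arg| - ε) < 0 := by
    apply Real.cos_neg_of_pi_div_two_lt_of_lt (by linarith)
    linarith [Real.pi_pos]
  have hexp : Real.cos (|u.arg| - ε) = Real.cos |u.arg| * Real.cos ε + Real.sin |u.arg| * Real.sin ε :=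
    Real.cos_sub _ _
  have hcε : 0 < Real.cos ε := Real.cos_pos_of_mem_Ioo ⟨by linarith, hε2⟩
  have htan : Real.tan ε = Real.sin ε / Real.cos ε := Real.tan_eq_sin_div_cos ε
  have hure : u.re = ‖u‖ * Real.cos u.arg := by rw [hre]; field_simp
  have huim : |u.im| = ‖u‖ * |Real.sin u.arg| := by
    rw [him, abs_div, _root_.abs_of_nonneg habs.le]; field_simp
  rw [hure, huim, htan] at h
  rw [hexp, hcosabs, hsinabs] at hcosneg
  have : 0 ≤ ‖u‖ * Real.cos u.arg * Real.cos ε + Real.sin ε * (‖u‖ * |Real.sin u.arg|) := by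
    have := mul_le_mul_of_nonneg_right h hcε.le
    field_simp at this ⊢
    nlinarith [this]
  nlinarith [this, habs]

set_option maxHeartbeats 1000000 in
lemma key_ineq (t m x y : ℝ) (ht : 0 < t) (hm0 : 0 < m) (hmt : m ≤ t/4)
    (hm1 : m ≤ 1/100) (hy : |y| ≤ Real.pi + 1) (hx : x < 0 → -x ≤ m * |y|)
    (hxy : ¬ (x = 0 ∧ y = 0)) :
    0 ≤ ((1 - Real.exp (-x) * Real.cos y)^2 + (1 - (Real.exp (-x))^2)/2)
        + t * |Real.exp (-x) * Real.sin y * (2 - Real.exp (-x) * Real.cos y)| ∧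
    ¬ ((1 - Real.exp (-x) * Real.cos y)^2 + (1 - (Real.exp (-x))^2)/2 = 0 ∧
       Real.exp (-x) * Real.sin y * (2 - Real.exp (-x) * Real.cos y) = 0) := by
  have hπ1 : (3.141592 : ℝ) < Real.pi := Real.pi_gt_d6
  have hπ2 : Real.pi < 3.15 := Real.pi_lt_d2
  set r := Real.exp (-x) with hrdef
  set c := Real.cos y with hcdef
  set s := Real.sin y with hsdef
  have hr0 : 0 < r := Real.exp_pos _
  have hc1 : |c| ≤ 1 := Real.abs_cos_le_one y
  have hs1 : |s| ≤ 1 := Real.abs_sin_le_one y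
  -- global upper bound on r
  have hrB : r ≤ 20/19 := by
    rcases le_or_gt 0 x with hx0 | hx0
    · have : r ≤ 1 := Real.exp_le_one_iff.mpr (by linarith)
      linarith
    · have h1 : -x ≤ m * |y| := hx hx0
      have h2 : m * |y| ≤ (1/100) * (Real.pi + 1) := by
        apply mul_le_mul hm1 hy (abs_nonneg y) (by norm_num)
      have h3 : -x ≤ 1/20 := by linarith
      have h4 : (1 : ℝ) - 1/20 ≤ Real.exp (-(1/20)) := by
        have := Real.add_one_le_exp (-(1/20 : ℝ)); linarith
      have h5 : Real.exp (-x) ≤ Real.exp (1/20) := Real.exp_le_exp.mpr h3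
      have h6 : Real.exp (1/20) * Real.exp (-(1/20)) = 1 := by
        rw [← Real.exp_add]; norm_num
      have h7 : Real.exp (-(1/20 : ℝ)) > 0 := Real.exp_pos _
      nlinarith [h4, h5, h6, h7]
  have habsterm : 0 ≤ t * |r * s * (2 - r*c)| :=
    mul_nonneg ht.le (abs_nonneg _)
  rcases le_or_gt c 0 with hc | hc
  · -- cos y ≤ 0 : real part is strictly positive
    have hrc : r * c ≤ 0 := mul_nonpos_of_nonneg_of_nonpos hr0.le hc
    have h1 : 1 ≤ (1 - r*c)^2 := by nlinarith
    have hRe : 0 < (1 - r*c)^2 + (1 - r^2)/2 := by nlinarith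
    exact ⟨by linarith, fun h => by linarith [h.1]⟩
  · -- cos y > 0
    have hy2 : |y| < Real.pi/2 := by
      by_contra hcon
      push_neg at hcon
      have : Real.cos |y| ≤ 0 :=
        Real.cos_nonpos_of_pi_div_two_le_of_le hcon (by linarith)
      rw [Real.cos_abs] at this
      linarith
    rcases le_or_gt r 1 with hr1 | hr1
    · -- r ≤ 1 : both terms nonneg
      have hsq : 0 ≤ (1 - r*c)^2 := sq_nonneg _
      have hr2 : r^2 ≤ 1 := by nlinarith
      have hRe : 0 ≤ (1 - r*c)^2 + (1 - r^2)/2 := by linarith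
      refine ⟨by linarith, ?_⟩
      rintro ⟨h1, h2⟩
      have hA : (1 - r*c)^2 = 0 := by linarith
      have hB : (1 - r^2) = 0 := by linarith
      have hre1 : r = 1 := by nlinarith
      have hcc : c = 1 := by
        rw [hre1, one_mul] at hA
        nlinarith [hA]
      have hx0 : x = 0 := by
        have h5 : Real.exp (-x) = Real.exp 0 := by rw [Real.exp_zero]; exact hre1
        have h6 : -x = 0 := Real.exp_injective h5
        linarith
      have hy0 : y = 0 := by
        have h7 := Real.cos_eq_one_iff_of_lt_of_lt (x := y)
          (by nlinarith [neg_abs_le y]) (by nlinarith [le_abs_self y])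
        exact h7.mp hcc
      exact hxy ⟨hx0, hy0⟩
    · -- r > 1
      have hxneg : x < 0 := by
        by_contra hcon; push_neg at hcon
        have : r ≤ 1 := Real.exp_le_one_iff.mpr (by linarith)
        linarith
      have h1 : -x ≤ m * |y| := hx hxneg
      have hyne : y ≠ 0 := by
        intro h0
        rw [h0] at h1
        simp at h1
        linarith
      have hy0 : 0 < |y| := abs_pos.mpr hyne
      have hsabs : |s| = Real.sin |y| := by
        rcases abs_cases y with ⟨e1, e2⟩ | ⟨e1, e2⟩
        · rw [e1, _root_.abs_of_nonneg (Real.sin_nonneg_of_nonneg_of_le_pi e2 (by linarith))]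
        · rw [e1, Real.sin_neg, _root_.abs_of_nonpos (Real.sin_nonpos_of_nonpos_of_neg_pi_le e2.le (by linarith))]
      have hjordan : 2/Real.pi * |y| ≤ Real.sin |y| :=
        Real.mul_le_sin (abs_nonneg y) hy2.le
      have hsy : 2/Real.pi * |y| ≤ |s| := by rw [hsabs]; exact hjordan
      have hrexp : r ≤ Real.exp (m * |y|) := Real.exp_le_exp.mpr h1
      have ha0 : 0 ≤ 2 * m * |y| := by positivity
      have haB : 2 * m * |y| ≤ 1/12 := by nlinarith
      have hr2exp : r^2 ≤ Real.exp (2 * m * |y|) := by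
        have he : Real.exp (m*|y|) ^ 2 = Real.exp (2 * m * |y|) := by
          rw [pow_two, ← Real.exp_add]; ring_nf
        nlinarith [Real.exp_pos (m * |y|)]
      have hexpb : Real.exp (2*m*|y|) - 1 ≤ (12/11) * (2*m*|y|) := by
        have h4 : (1 : ℝ) - 2*m*|y| ≤ Real.exp (-(2*m*|y|)) := by
          have := Real.add_one_le_exp (-(2*m*|y|)); linarith
        have h6 : Real.exp (2*m*|y|) * Real.exp (-(2*m*|y|)) = 1 := by
          rw [← Real.exp_add]; ring_nf; exact Real.exp_zero
        have h7 : (0:ℝ) < Real.exp (-(2*m*|y|)) := Real.exp_pos _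
        nlinarith [h4, h6, h7]
      have hr2m1 : (r^2 - 1)/2 ≤ (12/11) * m * |y| := by nlinarith
      have hrc2 : (18:ℝ)/19 ≤ 2 - r*c := by nlinarith [abs_le.mp hc1]
      have hrcp : (0:ℝ) ≤ 2 - r*c := by linarith
      have habseq : |r * s * (2 - r*c)| = r * |s| * (2 - r*c) := by
        rw [abs_mul, abs_mul, _root_.abs_of_nonneg hr0.le, _root_.abs_of_nonneg hrcp]
      have hA : (2/Real.pi * |y|) * (18/19) ≤ |s| * (2 - r*c) :=
        mul_le_mul hsy hrc2 (by norm_num) (abs_nonneg s)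
      have hIm0 : 2/Real.pi * |y| * (18/19) ≤ r * |s| * (2 - r*c) := by
        nlinarith [hA, mul_nonneg (abs_nonneg s) hrcp]
      have hpi : (2:ℝ)/3.15 ≤ 2/Real.pi := by
        rw [div_le_div_iff₀ (by norm_num) Real.pi_pos]
        nlinarith
      have e2 : (12/11) * m * |y| ≤ t * (2/Real.pi * |y| * (18/19)) := by
        have hmty : m * |y| ≤ t/4 * |y| := by nlinarith
        nlinarith [mul_nonneg ht.le (abs_nonneg y),
          mul_nonneg (mul_nonneg ht.le (abs_nonneg y)) (sub_nonneg.mpr hpi)]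
      have hbig : (r^2-1)/2 ≤ t * |r * s * (2 - r*c)| := by
        rw [habseq]
        have e1 : t * (2/Real.pi * |y| * (18/19)) ≤ t * (r * |s| * (2 - r*c)) :=
          mul_le_mul_of_nonneg_left hIm0 ht.le
        calc (r^2-1)/2 ≤ (12/11) * m * |y| := hr2m1
          _ ≤ t * (2/Real.pi * |y| * (18/19)) := e2
          _ ≤ t * (r * |s| * (2 - r*c)) := e1
          _ = t * (r * |s| * (2 - r*c)) := rfl
      constructor
      · have := sq_nonneg (1 - r*c)
        linarith [hbig]
      · rintro ⟨h1', h2'⟩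
        have hQ : (0:ℝ) < 2/Real.pi * |y| := by
          have := Real.pi_pos
          have h2π : (0:ℝ) < 2/Real.pi := by positivity
          exact mul_pos h2π hy0
        have hspos : (0:ℝ) < |s| := lt_of_lt_of_le hQ hsy
        have hsne : s ≠ 0 := _root_.abs_pos.mp hspos
        have h2pos : (0:ℝ) < 2 - r*c := lt_of_lt_of_le (by norm_num) hrc2
        exact (mul_ne_zero (mul_ne_zero (ne_of_gt hr0) hsne) (ne_of_gt h2pos)) h2'

set_option maxHeartbeats 1000000 in
theorem stmt_6 (L ε : ℝ) (hL : 0 ≤ L) (hε : ε ∈ Set.Ioo 0 (Real.pi / 2)) :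
    ∃ θ₀ ∈ Set.Ioo (Real.pi / 2) (5 * Real.pi / 8), ∃ τ₀ > (0 : ℝ),
      ∀ θ ∈ Set.Ioo (Real.pi / 2) θ₀, ∀ τ ∈ Set.Ioc (0 : ℝ) τ₀,
        ∀ z : ℂ, z ≠ 0 → |z.arg| ≤ θ → |z.im| ≤ Real.pi / τ + L →
          (3 / 2 - 2 * Complex.exp (-z * (τ : ℂ))
              + Complex.exp (-2 * z * (τ : ℂ)) / 2) / (τ : ℂ) ≠ 0 ∧
          |((3 / 2 - 2 * Complex.exp (-z * (τ : ℂ))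
              + Complex.exp (-2 * z * (τ : ℂ)) / 2) / (τ : ℂ)).arg|
            ≤ Real.pi / 2 + ε := by
  obtain ⟨hε1, hε2⟩ := hε
  have hπ1 : (3.141592 : ℝ) < Real.pi := Real.pi_gt_d6
  have hπ2 : Real.pi < 3.15 := Real.pi_lt_d2
  set t := Real.tan ε with ht_def
  have ht : 0 < t := Real.tan_pos_of_pos_of_lt_pi_div_two hε1 hε2
  set m := min (t/4) (1/100 : ℝ) with hm_def
  have hm0 : 0 < m := lt_min (by positivity) (by norm_num)
  have hmt : m ≤ t/4 := min_le_left _ _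
  have hm1 : m ≤ 1/100 := min_le_right _ _
  have harc0 : 0 < Real.arctan m := by
    rw [← Real.arctan_zero]; exact Real.arctan_strictMono hm0
  have harcm : Real.arctan m < m := by
    have h1 : Real.arctan m < Real.pi/2 := Real.arctan_lt_pi_div_two m
    have := Real.lt_tan harc0 h1
    rwa [Real.tan_arctan] at this
  have harcs : Real.arctan m < Real.pi/8 := by linarith
  refine ⟨Real.pi/2 + Real.arctan m, ⟨by linarith, by linarith⟩,
    1/(L+1), by positivity, ?_⟩
  rintro θ ⟨hθ1, hθ2⟩ τ ⟨hτ0, hτ1⟩ z hz hargz himz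
  set x := z.re * τ with hx_def
  set y := z.im * τ with hy_def
  -- |y| ≤ π + 1
  have hyabs : |y| = |z.im| * τ := by
    rw [hy_def, abs_mul, abs_of_pos hτ0]
  have hLτ : L * τ ≤ 1 := by
    have h1 : L * τ ≤ L * (1/(L+1)) := mul_le_mul_of_nonneg_left hτ1 hL
    have h2 : L * (1/(L+1)) ≤ 1 := by
      rw [mul_one_div, div_le_one (by linarith)]; linarith
    linarith
  have hyB : |y| ≤ Real.pi + 1 := by
    rw [hyabs]
    have h1 : |z.im| * τ ≤ (Real.pi/τ + L) * τ :=
      mul_le_mul_of_nonneg_right himz hτ0.le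
    have h2 : (Real.pi/τ + L) * τ = Real.pi + L * τ := by
      field_simp
    linarith [h1, h2 ▸ h1]
  -- the angle condition
  have hxB : x < 0 → -x ≤ m * |y| := by
    intro hx0
    have hzre : z.re < 0 := by
      by_contra hcon; push_neg at hcon
      have : 0 ≤ x := mul_nonneg hcon hτ0.le
      linarith
    have habsz : 0 < ‖z‖ := norm_pos_iff.mpr hz
    have hcosarg : Real.cos z.arg = z.re / ‖z‖ := Complex.cos_arg hz
    have hsinarg : Real.sin z.arg = z.im / ‖z‖ := Complex.sin_arg z
    have hzre_eq : z.re = ‖z‖ * Real.cos z.arg := by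
      rw [hcosarg]; field_simp
    have hzim_eq : z.im = ‖z‖ * Real.sin z.arg := by
      rw [hsinarg]; field_simp
    have hcosneg : Real.cos z.arg < 0 := by
      rw [hcosarg]
      exact div_neg_of_neg_of_pos hzre habsz
    have hApi : |z.arg| ≤ Real.pi := Complex.abs_arg_le_pi z
    have hA2 : Real.pi/2 < |z.arg| := by
      by_contra hcon; push_neg at hcon
      have h1 := abs_le.mp hcon
      have : 0 ≤ Real.cos z.arg :=
        Real.cos_nonneg_of_mem_Icc ⟨h1.1, h1.2⟩
      linarith
    set a := |z.arg| - Real.pi/2 with ha_def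
    have ha0 : 0 < a := by simp [ha_def]; linarith
    have haθ : a < Real.arctan m := by
      have : |z.arg| ≤ θ := hargz
      simp only [ha_def]
      linarith
    have haπ : a < Real.pi/2 := lt_trans haθ (Real.arctan_lt_pi_div_two m)
    have hcosa : 0 < Real.cos a := Real.cos_pos_of_mem_Ioo ⟨by linarith, haπ⟩
    have htana : Real.tan a < m := by
      have := Real.tan_lt_tan_of_lt_of_lt_pi_div_two (by linarith)
        (Real.arctan_lt_pi_div_two m) haθ
      rwa [Real.tan_arctan] at this
    have hsina : Real.sin a ≤ m * Real.cos a := by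
      have h1 : Real.tan a = Real.sin a / Real.cos a := Real.tan_eq_sin_div_cos a
      rw [h1, div_lt_iff₀ hcosa] at htana
      linarith
    have hAa : |z.arg| = a + Real.pi/2 := by simp [ha_def]
    have hcosA : Real.cos |z.arg| = -Real.sin a := by
      rw [hAa, Real.cos_add_pi_div_two]
    have hsinA : Real.sin |z.arg| = Real.cos a := by
      rw [hAa, Real.sin_add_pi_div_two]
    have hreabs : -z.re = ‖z‖ * Real.sin a := by
      rw [hzre_eq, ← Real.cos_abs, hcosA]; ring
    have himA : |z.im| = ‖z‖ * Real.cos a := by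
      rw [hzim_eq, abs_mul, _root_.abs_of_pos habsz, ← hsinA]
      congr 1
      rcases abs_cases z.arg with ⟨e1, e2⟩ | ⟨e1, e2⟩
      · rw [e1, _root_.abs_of_nonneg (Real.sin_nonneg_of_nonneg_of_le_pi e2 (by linarith [le_abs_self z.arg]))]
      · rw [e1, Real.sin_neg, _root_.abs_of_nonpos (Real.sin_nonpos_of_nonpos_of_neg_pi_le e2.le (by linarith [neg_abs_le z.arg]))]
    have hkey : -z.re ≤ m * |z.im| := by
      rw [hreabs, himA]
      calc ‖z‖ * Real.sin a ≤ ‖z‖ * (m * Real.cos a) :=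
            mul_le_mul_of_nonneg_left hsina habsz.le
        _ = m * (‖z‖ * Real.cos a) := by ring
    have hxx : -x = (-z.re) * τ := by rw [hx_def]; ring
    rw [hxx, hyabs]
    calc (-z.re) * τ ≤ (m * |z.im|) * τ :=
          mul_le_mul_of_nonneg_right hkey hτ0.le
      _ = m * (|z.im| * τ) := by ring
  have hxy : ¬ (x = 0 ∧ y = 0) := by
    rintro ⟨h1, h2⟩
    apply hz
    have hτne : τ ≠ 0 := ne_of_gt hτ0
    apply Complex.ext
    · exact (mul_eq_zero.mp h1).resolve_right hτne
    · exact (mul_eq_zero.mp h2).resolve_right hτne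
  -- complex computations
  set r := Real.exp (-x) with hr_def
  set c := Real.cos y with hc_def
  set s := Real.sin y with hs_def
  set E := Complex.exp (-z * (τ:ℂ)) with hE_def
  have hwre : (-z * (τ:ℂ)).re = -x := by
    simp [Complex.mul_re, hx_def]
  have hwim : (-z * (τ:ℂ)).im = -y := by
    simp [Complex.mul_im, hy_def]
  have hEre : E.re = r * c := by
    rw [hE_def, Complex.exp_re, hwre, hwim, Real.cos_neg, hr_def, hc_def]
  have hEim : E.im = -(r * s) := by
    rw [hE_def, Complex.exp_im, hwre, hwim, Real.sin_neg, hr_def, hs_def]; ring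
  have hE2 : Complex.exp (-2 * z * (τ:ℂ)) = E * E := by
    rw [hE_def, ← Complex.exp_add]
    congr 1
    ring
  set f : ℂ := 3 / 2 - 2 * E + E * E / 2 with hf_def
  have hfre : f.re = 3/2 - 2*(r*c) + ((r*c)^2 - (r*s)^2)/2 := by
    have h2 : (E*E/2 : ℂ).re = (E.re*E.re - E.im*E.im)/2 := by
      rw [show (E*E/2 : ℂ) = E*E/((2:ℝ):ℂ) by norm_num, Complex.div_ofReal_re,
        Complex.mul_re]
    have h3 : ((3:ℂ)/2).re = 3/2 := by norm_num
    rw [hf_def]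
    rw [Complex.add_re, Complex.sub_re, Complex.mul_re, h2, h3, hEre, hEim]
    norm_num
    ring
  have hfim : f.im = 2*(r*s) - (r*c)*(r*s) := by
    have h2 : (E*E/2 : ℂ).im = (E.re*E.im + E.im*E.re)/2 := by
      rw [show (E*E/2 : ℂ) = E*E/((2:ℝ):ℂ) by norm_num, Complex.div_ofReal_im,
        Complex.mul_im]
    have h3 : ((3:ℂ)/2).im = 0 := by norm_num
    rw [hf_def]
    rw [Complex.add_im, Complex.sub_im, Complex.mul_im, h2, h3, hEre, hEim]
    norm_num
    ring
  have hpyth : s^2 + c^2 = 1 := Real.sin_sq_add_cos_sq y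
  have hre_eq : f.re = (1 - r*c)^2 + (1 - r^2)/2 := by
    rw [hfre]
    linear_combination (-(r^2)/2) * hpyth
  have him_eq : f.im = r*s*(2 - r*c) := by rw [hfim]; ring
  obtain ⟨hkey1, hkey2⟩ := key_ineq t m x y ht hm0 hmt hm1 hyB hxB hxy
  rw [← hr_def, ← hc_def, ← hs_def] at hkey1 hkey2
  have hfne : f ≠ 0 := by
    intro h0
    apply hkey2
    rw [← hre_eq, ← him_eq, h0]
    simp
  have hτcne : (τ:ℂ) ≠ 0 := Complex.ofReal_ne_zero.mpr (ne_of_gt hτ0)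
  have hgoal_eq : (3 / 2 - 2 * Complex.exp (-z * (τ : ℂ))
      + Complex.exp (-2 * z * (τ : ℂ)) / 2) / (τ : ℂ) = f / (τ:ℂ) := by
    rw [hE2, hf_def, hE_def]
  rw [hgoal_eq]
  have hune : f / (τ:ℂ) ≠ 0 := div_ne_zero hfne hτcne
  refine ⟨hune, ?_⟩
  apply sector_crit hε1 hε2 hune
  have hure : (f / (τ:ℂ)).re = f.re / τ := Complex.div_ofReal_re f τ
  have huim : (f / (τ:ℂ)).im = f.im / τ := Complex.div_ofReal_im f τ
  rw [hure, huim, abs_div, _root_.abs_of_pos hτ0]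
  have hnum : 0 ≤ f.re + t * |f.im| := by
    rw [hre_eq, him_eq]
    exact hkey1
  rw [← ht_def]
  have : f.re / τ + t * (|f.im| / τ) = (f.re + t * |f.im|) / τ := by
    field_simp
  rw [this]
  positivity
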